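/- Let n ∈ ℕ and let A ∈ ℝ^{n×n} be an invertible matrix. Then σ_max(A)/σ_min(A) ≤ (2/|det(A)|) · (‖A‖_F/√n)^n, where σ_max and σ_min are the largest and smallest singular values of A and ‖A‖_F is the Frobenius norm. -/

import Mathlib

open Matrix RealInnerProductSpace
open Matrix RealInnerProductSpace

noncomputable def ee (n : ℕ) (y : Fin n → ℝ) : EuclideanSpace ℝ (Fin n) :=
  (WithLp.equiv 2 _).symm y

lemma inner_ee (n : ℕ) (u v : Fin n → ℝ) : ⟪ee n u, ee n v⟫ = u ⬝ᵥ v := by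
  simp [PiLp.inner_apply, RCLike.inner_apply, ee, dotProduct]
  exact Finset.sum_congr rfl fun i _ => mul_comm _ _

lemma key_formula (n : ℕ) (A : Matrix (Fin n) (Fin n) ℝ) (hS : (Aᴴ * A).IsHermitian)
    (x : Fin n → ℝ) :
    ∑ i, (A.mulVec x i)^2 = ∑ i, hS.eigenvalues i * (⇑(hS.eigenvectorBasis i) ⬝ᵥ x) ^ 2 := by
  have hT : (Aᴴ * A)ᵀ = Aᴴ * A := by
    ext i j; have := congrFun (congrFun hS i) j
    simpa using this
  have h1 : ∑ i, (A.mulVec x i)^2 = x ⬝ᵥ ((Aᴴ * A) *ᵥ x) := by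
    rw [← mulVec_mulVec, dotProduct_mulVec, vecMul_conjTranspose]
    simp [dotProduct, mulVec, sq, mul_comm]
  have h3 : ∀ i : Fin n, ⇑(hS.eigenvectorBasis i) ⬝ᵥ ((Aᴴ * A) *ᵥ x)
      = hS.eigenvalues i * (⇑(hS.eigenvectorBasis i) ⬝ᵥ x) := by
    intro i
    rw [dotProduct_mulVec, ← mulVec_transpose, hT, hS.mulVec_eigenvectorBasis,
      smul_dotProduct]
    rfl
  have h2 := hS.eigenvectorBasis.sum_inner_mul_inner (ee n x) (ee n ((Aᴴ * A) *ᵥ x))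
  rw [h1, ← inner_ee n x ((Aᴴ * A) *ᵥ x), ← h2]
  refine Finset.sum_congr rfl fun i _ => ?_
  have e1 : ⟪(hS.eigenvectorBasis i : EuclideanSpace ℝ (Fin n)), ee n ((Aᴴ * A) *ᵥ x)⟫
      = hS.eigenvalues i * (⇑(hS.eigenvectorBasis i) ⬝ᵥ x) :=
    (inner_ee n (⇑(hS.eigenvectorBasis i)) ((Aᴴ * A) *ᵥ x)).trans (h3 i)
  have e2 : ⟪ee n x, (hS.eigenvectorBasis i : EuclideanSpace ℝ (Fin n))⟫
      = ⇑(hS.eigenvectorBasis i) ⬝ᵥ x := by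
    rw [real_inner_comm]
    exact inner_ee n (⇑(hS.eigenvectorBasis i)) x
  rw [e1, e2]; ring

lemma norm_formula (n : ℕ) (A : Matrix (Fin n) (Fin n) ℝ) (hS : (Aᴴ * A).IsHermitian)
    (x : Fin n → ℝ) :
    ∑ i, (⇑(hS.eigenvectorBasis i) ⬝ᵥ x) ^ 2 = ∑ i, x i ^ 2 := by
  have h2 := hS.eigenvectorBasis.sum_inner_mul_inner (ee n x) (ee n x)
  rw [inner_ee] at h2
  have e2 : ∀ i : Fin n, ⟪ee n x, (hS.eigenvectorBasis i : EuclideanSpace ℝ (Fin n))⟫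
      = ⇑(hS.eigenvectorBasis i) ⬝ᵥ x := by
    intro i; rw [real_inner_comm]; exact inner_ee n _ x
  have e3 : ∀ i : Fin n, ⟪(hS.eigenvectorBasis i : EuclideanSpace ℝ (Fin n)), ee n x⟫
      = ⇑(hS.eigenvectorBasis i) ⬝ᵥ x := fun i => inner_ee n _ x
  simp_rw [e2, e3, ← sq] at h2
  rw [h2]
  simp [dotProduct, sq]

lemma basis_unit (n : ℕ) (A : Matrix (Fin n) (Fin n) ℝ) (hS : (Aᴴ * A).IsHermitian) (j : Fin n) :
    ∑ i, ((hS.eigenvectorBasis j : EuclideanSpace ℝ (Fin n)) i) ^ 2 = 1 := by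
  have h : ⟪(hS.eigenvectorBasis j : EuclideanSpace ℝ (Fin n)), hS.eigenvectorBasis j⟫ = 1 := by
    rw [real_inner_self_eq_norm_sq, hS.eigenvectorBasis.orthonormal.1 j]; norm_num
  rw [← h]
  simp only [PiLp.inner_apply, RCLike.inner_apply, conj_trivial, sq]

lemma dot_basis_basis (n : ℕ) (A : Matrix (Fin n) (Fin n) ℝ) (hS : (Aᴴ * A).IsHermitian)
    (i j : Fin n) :
    ⇑(hS.eigenvectorBasis i) ⬝ᵥ ⇑(hS.eigenvectorBasis j) = if i = j then 1 else 0 := by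
  rcases eq_or_ne i j with h | h
  · subst h; rw [if_pos rfl]
    have := basis_unit n A hS i
    simpa [dotProduct, sq] using this
  · rw [if_neg h]
    exact (inner_ee n _ _).symm.trans (hS.eigenvectorBasis.orthonormal.2 h)

lemma sqrt_pow'' (x : ℝ) (hx : 0 ≤ x) (m : ℕ) : Real.sqrt (x ^ m) = Real.sqrt x ^ m := by
  induction m with
  | zero => simp
  | succ k ih => rw [pow_succ, Real.sqrt_mul (pow_nonneg hx k), ih, pow_succ]

lemma amgm (n : ℕ) (hn : 0 < n) (z : Fin n → ℝ) (hz : ∀ i, 0 ≤ z i) :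
    ∏ i, z i ≤ ((∑ i, z i) / n) ^ n := by
  have hn' : (n : ℝ) ≠ 0 := Nat.cast_ne_zero.2 hn.ne'
  have h := Real.geom_mean_le_arith_mean_weighted Finset.univ (fun _ => (n : ℝ)⁻¹) z
    (fun _ _ => by positivity) (by simp [Finset.card_univ, mul_comm]; field_simp)
    (fun i _ => hz i)
  rw [Real.finset_prod_rpow _ _ (fun i _ => hz i)] at h
  have hrhs : ∑ i : Fin n, (n : ℝ)⁻¹ * z i = (∑ i, z i) / n := by
    rw [← Finset.mul_sum]; field_simp
  rw [hrhs] at h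
  have h2 := pow_le_pow_left₀ (Real.rpow_nonneg (Finset.prod_nonneg fun i _ => hz i) _) h n
  rwa [← Real.rpow_natCast ((∏ i, z i) ^ ((n:ℝ)⁻¹)) n, ← Real.rpow_mul
    (Finset.prod_nonneg fun i _ => hz i), inv_mul_cancel₀ hn', Real.rpow_one] at h2

lemma key_ineq (n : ℕ) (μ : Fin n → ℝ) (hpos : ∀ i, 0 < μ i) (iM im : Fin n) (hne : im ≠ iM)
    (hmax : ∀ i, μ i ≤ μ iM) (d : ℝ) (hd : 0 < d) (hdet : ∏ i, μ i = d ^ 2) :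
    Real.sqrt (μ iM) / Real.sqrt (μ im) ≤ 2 / d * (Real.sqrt (∑ i, μ i) / Real.sqrt n) ^ n := by
  have hn : 0 < n := Fin.pos iM
  have hn' : (0:ℝ) < n := Nat.cast_pos.2 hn
  set s : Finset (Fin n) := (Finset.univ.erase iM).erase im with hs
  have him : im ∈ Finset.univ.erase iM := Finset.mem_erase.2 ⟨hne, Finset.mem_univ _⟩
  have hmem : ∀ i ∈ s, i ≠ im ∧ i ≠ iM := by
    intro i hi
    rw [hs, Finset.mem_erase, Finset.mem_erase] at hi
    exact ⟨hi.1, hi.2.1⟩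
  set z : Fin n → ℝ := fun i => if i = iM ∨ i = im then μ iM / 2 else μ i with hzdef
  have hz : ∀ i, 0 ≤ z i := by
    intro i; rw [hzdef]; dsimp only
    split
    · linarith [hpos iM]
    · exact (hpos i).le
  have hprodμ : ∏ i, μ i = μ iM * (μ im * ∏ i ∈ s, μ i) := by
    rw [← Finset.mul_prod_erase _ _ (Finset.mem_univ iM), ← Finset.mul_prod_erase _ _ him]
  have hprodz : ∏ i, z i = μ iM / 2 * (μ iM / 2 * ∏ i ∈ s, μ i) := by
    rw [← Finset.mul_prod_erase _ _ (Finset.mem_univ iM), ← Finset.mul_prod_erase _ _ him]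
    have : ∀ i ∈ s, z i = μ i := by
      intro i hi
      have := hmem i hi
      simp [hzdef, this.1, this.2]
    rw [Finset.prod_congr rfl this]
    simp [hzdef]
  have hsumμ : ∑ i, μ i = μ iM + (μ im + ∑ i ∈ s, μ i) := by
    rw [← Finset.add_sum_erase _ _ (Finset.mem_univ iM), ← Finset.add_sum_erase _ _ him]
  have hsumz : ∑ i, z i = μ iM / 2 + (μ iM / 2 + ∑ i ∈ s, μ i) := by
    rw [← Finset.add_sum_erase _ _ (Finset.mem_univ iM), ← Finset.add_sum_erase _ _ him]
    have : ∀ i ∈ s, z i = μ i := by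
      intro i hi
      have := hmem i hi
      simp [hzdef, this.1, this.2]
    rw [Finset.sum_congr rfl this]
    simp [hzdef]
  have hP : 0 ≤ ∏ i ∈ s, μ i := Finset.prod_nonneg fun i _ => (hpos i).le
  have hsum_nonneg : 0 ≤ ∑ i, z i := Finset.sum_nonneg fun i _ => hz i
  have hsumle : ∑ i, z i ≤ ∑ i, μ i := by
    rw [hsumμ, hsumz]; linarith [hpos im]
  have hT : 0 ≤ ∑ i, μ i := Finset.sum_nonneg fun i _ => (hpos i).le
  have hkey : μ iM ^ 2 * ∏ i ∈ s, μ i ≤ 4 * ((∑ i, μ i) / n) ^ n := by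
    have h1 := amgm n hn z hz
    have h2 : ((∑ i, z i) / n) ^ n ≤ ((∑ i, μ i) / n) ^ n := by
      apply pow_le_pow_left₀ (div_nonneg hsum_nonneg hn'.le)
      exact div_le_div_of_nonneg_right hsumle hn'.le |>.trans_eq rfl
    nlinarith [hprodz]
  have lhs_eq : Real.sqrt (μ iM) / Real.sqrt (μ im) = Real.sqrt (μ iM / μ im) :=
    (Real.sqrt_div (hpos iM).le _).symm
  have hd2 : (0:ℝ) < d ^ 2 := by positivity
  have rhs_eq : 2 / d * (Real.sqrt (∑ i, μ i) / Real.sqrt n) ^ n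
      = Real.sqrt (4 / d ^ 2 * ((∑ i, μ i) / n) ^ n) := by
    rw [Real.sqrt_mul (by positivity : (0:ℝ) ≤ 4 / d ^ 2),
      Real.sqrt_div (by norm_num : (0:ℝ) ≤ 4),
      sqrt_pow'' _ (div_nonneg hT hn'.le), Real.sqrt_div hT, Real.sqrt_sq hd.le,
      show Real.sqrt 4 = 2 by
        rw [show (4:ℝ) = 2^2 by norm_num, Real.sqrt_sq]; norm_num]
  rw [lhs_eq, rhs_eq]
  apply Real.sqrt_le_sqrt
  have h5 : μ iM * d ^ 2 ≤ 4 * ((∑ i, μ i) / n) ^ n * μ im := by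
    calc μ iM * d ^ 2 = μ iM ^ 2 * (∏ i ∈ s, μ i) * μ im := by rw [← hdet, hprodμ]; ring
    _ ≤ 4 * ((∑ i, μ i) / n) ^ n * μ im := mul_le_mul_of_nonneg_right hkey (hpos im).le
  rw [show 4 / d ^ 2 * ((∑ i, μ i) / ↑n) ^ n = 4 * ((∑ i, μ i) / ↑n) ^ n / d ^ 2 by ring,
    div_le_div_iff₀ (hpos im) hd2]
  linarith [h5]



/-- The least singular value of a square real matrix:
`σ_min(A) = √(inf_{‖x‖₂ = 1} ‖A x‖₂²)`. -/
noncomputable def sMin (n : ℕ) (A : Matrix (Fin n) (Fin n) ℝ) : ℝ :=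
  Real.sqrt (⨅ x : {x : Fin n → ℝ // ∑ i, (x i) ^ 2 = 1}, ∑ i, (A.mulVec x.1 i) ^ 2)

/-- The largest singular value of a square real matrix:
`σ_max(A) = √(sup_{‖x‖₂ = 1} ‖A x‖₂²)`. -/
noncomputable def sMax (n : ℕ) (A : Matrix (Fin n) (Fin n) ℝ) : ℝ :=
  Real.sqrt (⨆ x : {x : Fin n → ℝ // ∑ i, (x i) ^ 2 = 1}, ∑ i, (A.mulVec x.1 i) ^ 2)

/-- The Frobenius norm `‖A‖_F = (Σ_{i,j} A_{ij}²)^{1/2}`. -/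
noncomputable def frobNorm (n : ℕ) (A : Matrix (Fin n) (Fin n) ℝ) : ℝ :=
  Real.sqrt (∑ i, ∑ j, (A i j) ^ 2)

/-- Let `A ∈ ℝ^{n×n}` be invertible. Then
`σ_max(A)/σ_min(A) ≤ (2/|det A|) · (‖A‖_F/√n)^n`. -/
theorem guggenheimer_bound (n : ℕ) (A : Matrix (Fin n) (Fin n) ℝ) (hA : IsUnit A.det) :
    sMax n A / sMin n A ≤ 2 / |A.det| * (frobNorm n A / Real.sqrt n) ^ n := by
  have hdne : A.det ≠ 0 := hA.ne_zero
  have hd : 0 < |A.det| := abs_pos.2 hdne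
  rcases Nat.eq_zero_or_pos n with hn0 | hn
  · subst hn0
    haveI hE : IsEmpty {x : Fin 0 → ℝ // ∑ i, (x i) ^ 2 = 1} :=
      ⟨fun x => by simpa using x.2⟩
    rw [sMax, sMin, Real.iSup_of_isEmpty, Real.iInf_of_isEmpty]
    simp only [Real.sqrt_zero, pow_zero, mul_one, div_zero]
    positivity
  · haveI : Nonempty (Fin n) := Fin.pos_iff_nonempty.1 hn
    set hS := Matrix.isHermitian_conjTranspose_mul_self A with hSdef
    set μ := hS.eigenvalues with hμ
    have hprod : ∏ i, μ i = A.det ^ 2 := by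
      have h1 := hS.det_eq_prod_eigenvalues
      have h2 : det (Aᴴ * A) = A.det ^ 2 := by
        rw [det_mul, det_conjTranspose, sq]; simp
      rw [h2] at h1
      exact_mod_cast h1.symm
    have habs : ∏ i, μ i = |A.det| ^ 2 := by rw [hprod, sq_abs]
    have μnonneg : ∀ i, 0 ≤ μ i := fun i =>
      (posSemidef_conjTranspose_mul_self A).eigenvalues_nonneg i
    have μpos : ∀ i, 0 < μ i := by
      intro i
      rcases (μnonneg i).lt_or_eq with h | h
      · exact h
      · exfalso
        have : ∏ j, μ j = 0 := Finset.prod_eq_zero (Finset.mem_univ i) h.symm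
        rw [hprod] at this
        exact hdne (by nlinarith)
    have htr : ∑ i, μ i = ∑ i, ∑ j, (A i j) ^ 2 := by
      have h2 := congrArg Matrix.trace hS.conjStarAlgAut_star_eigenvectorUnitary
      rw [Unitary.conjStarAlgAut_star_apply] at h2
      rw [trace_mul_cycle, (Matrix.mem_unitaryGroup_iff).mp (hS.eigenvectorUnitary).2,
        one_mul, trace_diagonal] at h2
      have h3 : trace (Aᴴ * A) = ∑ i, ∑ j, (A i j)^2 := by
        rw [Finset.sum_comm]
        simp [trace, Matrix.mul_apply, sq]
      rw [h3] at h2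
      simp at h2
      exact h2.symm
    have hfrob : frobNorm n A = Real.sqrt (∑ i, μ i) := by rw [frobNorm, htr]
    obtain ⟨iM, hiM⟩ := Finite.exists_max μ
    obtain ⟨i0, hi0⟩ := Finite.exists_min μ
    haveI : Nonempty {x : Fin n → ℝ // ∑ i, (x i) ^ 2 = 1} :=
      ⟨⟨_, basis_unit n A hS iM⟩⟩
    have hub : ∀ x : {x : Fin n → ℝ // ∑ i, (x i) ^ 2 = 1},
        ∑ i, (A.mulVec x.1 i) ^ 2 ≤ μ iM := by
      intro x
      rw [key_formula n A hS x.1]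
      calc ∑ i, μ i * (⇑(hS.eigenvectorBasis i) ⬝ᵥ x.1) ^ 2
          ≤ ∑ i, μ iM * (⇑(hS.eigenvectorBasis i) ⬝ᵥ x.1) ^ 2 :=
            Finset.sum_le_sum fun i _ =>
              mul_le_mul_of_nonneg_right (hiM i) (sq_nonneg _)
        _ = μ iM * ∑ i, (⇑(hS.eigenvectorBasis i) ⬝ᵥ x.1) ^ 2 := by
            rw [Finset.mul_sum]
        _ = μ iM := by rw [norm_formula n A hS x.1, x.2, mul_one]
    have hlb : ∀ x : {x : Fin n → ℝ // ∑ i, (x i) ^ 2 = 1},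
        μ i0 ≤ ∑ i, (A.mulVec x.1 i) ^ 2 := by
      intro x
      rw [key_formula n A hS x.1]
      calc μ i0 = μ i0 * ∑ i, (⇑(hS.eigenvectorBasis i) ⬝ᵥ x.1) ^ 2 := by
            rw [norm_formula n A hS x.1, x.2, mul_one]
        _ = ∑ i, μ i0 * (⇑(hS.eigenvectorBasis i) ⬝ᵥ x.1) ^ 2 := by
            rw [Finset.mul_sum]
        _ ≤ ∑ i, μ i * (⇑(hS.eigenvectorBasis i) ⬝ᵥ x.1) ^ 2 :=
            Finset.sum_le_sum fun i _ =>
              mul_le_mul_of_nonneg_right (hi0 i) (sq_nonneg _)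
    have hval : ∀ j : Fin n,
        ∑ i, (A.mulVec (⇑(hS.eigenvectorBasis j)) i) ^ 2 = μ j := by
      intro j
      rw [key_formula n A hS]
      have : ∀ i, ⇑(hS.eigenvectorBasis i) ⬝ᵥ ⇑(hS.eigenvectorBasis j)
          = if i = j then 1 else 0 := fun i => dot_basis_basis n A hS i j
      simp_rw [this]
      simp
      rfl
    have hsup : (⨆ x : {x : Fin n → ℝ // ∑ i, (x i) ^ 2 = 1},
        ∑ i, (A.mulVec x.1 i) ^ 2) = μ iM := by
      refine le_antisymm (ciSup_le hub) ?_
      have := le_ciSup (f := fun x : {x : Fin n → ℝ // ∑ i, (x i) ^ 2 = 1} =>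
          ∑ i, (A.mulVec x.1 i) ^ 2)
        ⟨μ iM, by rintro _ ⟨x, rfl⟩; exact hub x⟩ ⟨_, basis_unit n A hS iM⟩
      exact le_of_eq_of_le (hval iM).symm this
    have hinf : (⨅ x : {x : Fin n → ℝ // ∑ i, (x i) ^ 2 = 1},
        ∑ i, (A.mulVec x.1 i) ^ 2) = μ i0 := by
      refine le_antisymm ?_ (le_ciInf hlb)
      have := ciInf_le (f := fun x : {x : Fin n → ℝ // ∑ i, (x i) ^ 2 = 1} =>
          ∑ i, (A.mulVec x.1 i) ^ 2)
        ⟨μ i0, by rintro _ ⟨x, rfl⟩; exact hlb x⟩ ⟨_, basis_unit n A hS i0⟩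
      exact le_of_le_of_eq this (hval i0)
    rw [sMax, sMin, hsup, hinf, hfrob]
    rcases eq_or_lt_of_le (show 1 ≤ n from hn) with h1 | h2
    · -- n = 1
      have hn1 : n = 1 := h1.symm
      subst hn1
      have hio : i0 = iM := Subsingleton.elim _ _
      rw [hio, div_self (Real.sqrt_ne_zero'.2 (μpos iM))]
      have hsum1 : ∑ i, μ i = μ iM := by
        rw [show iM = 0 from Subsingleton.elim _ _]
        simp
      have hpr1 : μ iM = |A.det| ^ 2 := by
        rw [← habs, show iM = 0 from Subsingleton.elim _ _]
        simp
      rw [hsum1, hpr1, Real.sqrt_sq hd.le]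
      simp only [Nat.cast_one, Real.sqrt_one, pow_one, div_one]
      rw [div_mul_cancel₀ _ hd.ne']
      norm_num
    · -- n ≥ 2
      obtain ⟨im, himne, himv⟩ : ∃ im, im ≠ iM ∧ μ im = μ i0 := by
        rcases eq_or_ne i0 iM with h | h
        · obtain ⟨j, hj⟩ := Fintype.exists_ne_of_one_lt_card (by simpa using h2) iM
          exact ⟨j, hj, le_antisymm (h ▸ hiM j) (hi0 j)⟩
        · exact ⟨i0, h, rfl⟩
      rw [← himv]
      exact key_ineq n μ μpos iM im himne hiM |A.det| hd habs
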